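/- The unnormalized two-qubit state Ψ := Π₂ + Π₃ is separable: it can be written as a sum of tensor products of positive semidefinite 2×2 matrices. Concretely, Ψ = ½ (|+i⟩⟨+i| ⊗ |−i⟩⟨−i| + |−i⟩⟨−i| ⊗ |+i⟩⟨+i| + |+⟩⟨+| ⊗ |+⟩⟨+| + |−⟩⟨−| ⊗ |−⟩⟨−|) · c for an appropriate positive constant c, or more simply, Ψ admits some decomposition Ψ = Σᵢ Aᵢ ⊗ Bᵢ with all Aᵢ, Bᵢ ⪰ 0. -/

import Mathlib

open Matrix Kronecker Real ComplexOrder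

noncomputable section

/-- Bell vector `|Φ⁻⟩ = (|00⟩ − |11⟩)/√2`. -/
def PhiM : Fin 2 × Fin 2 → ℂ :=
  fun p => (Real.sqrt 2 : ℂ)⁻¹ *
    (if p = (0, 0) then 1 else if p = (1, 1) then -1 else 0)
/-- Bell vector `|Ψ⁺⟩ = (|01⟩ + |10⟩)/√2`. -/
def PsiP : Fin 2 × Fin 2 → ℂ :=
  fun p => (Real.sqrt 2 : ℂ)⁻¹ * (if p.1 = p.2 then 0 else 1)

/-- The unnormalized state `Ψ = Π₂ + Π₃`, sum of the projectors onto `|Φ⁻⟩` and `|Ψ⁺⟩`. -/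
def PsiOp : Matrix (Fin 2 × Fin 2) (Fin 2 × Fin 2) ℂ :=
  vecMulVec PhiM (star PhiM) + vecMulVec PsiP (star PsiP)

lemma vecMulVec_star_posSemidef (v : Fin 2 → ℂ) :
    (vecMulVec v (star v)).PosSemidef := by
  rw [vecMulVec_eq (Fin 1), ← conjTranspose_replicateCol]
  exact posSemidef_self_mul_conjTranspose _

/-- `Ψ = Π₂ + Π₃` is separable: it admits a decomposition `Ψ = Σᵢ Aᵢ ⊗ Bᵢ`
with all `Aᵢ, Bᵢ` positive semidefinite `2×2` matrices. -/
theorem PsiOp_separable :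
    ∃ (k : ℕ) (A B : Fin k → Matrix (Fin 2) (Fin 2) ℂ),
      (∀ i, (A i).PosSemidef ∧ (B i).PosSemidef) ∧
      PsiOp = ∑ i, A i ⊗ₖ B i := by
  refine ⟨2, ![vecMulVec ![1/2, Complex.I/2] (star ![1/2, Complex.I/2]),
               vecMulVec ![1/2, -Complex.I/2] (star ![1/2, -Complex.I/2])],
             ![vecMulVec ![1, Complex.I] (star ![1, Complex.I]),
               vecMulVec ![1, -Complex.I] (star ![1, -Complex.I])], ?_, ?_⟩
  · intro i
    fin_cases i <;>
      exact ⟨vecMulVec_star_posSemidef _, vecMulVec_star_posSemidef _⟩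
  · have h2 : ((Real.sqrt 2 : ℝ) : ℂ)⁻¹ * ((Real.sqrt 2 : ℝ) : ℂ)⁻¹ = 1/2 := by
      rw [← mul_inv, ← Complex.ofReal_mul, Real.mul_self_sqrt (by norm_num)]
      norm_num
    ext ⟨i, j⟩ ⟨k, l⟩
    fin_cases i <;> fin_cases j <;> fin_cases k <;> fin_cases l <;>
      simp [PsiOp, PhiM, PsiP, vecMulVec, Matrix.sum_apply, Fin.sum_univ_two,
        Matrix.add_apply, kroneckerMap_apply, Complex.ext_iff, h2] <;>
      norm_num [Complex.div_re, Complex.div_im, Complex.normSq]
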